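/- Let D = d + A_0 + A_1 + A_2 be a ℤ-graded superconnection of total degree 1 on a two-term complex over a manifold, i.e., A_0 is a 0-form valued in degree −1 endomorphisms, A_1 a 1-form valued in degree 0 endomorphisms, A_2 a 2-form valued in degree 1 endomorphisms, satisfying (1) dA_0 = A_0 A_1 − A_1 A_0 and (2) −dA_1 = A_0 A_2 + A_1² + A_2 A_0. Then automatically dA_2 = −A_1 A_2 + A_2 A_1, provided A_0 is invertible as a map from the degree 1 to the degree 0 summand (equivalently, the complex is acyclic). -/
import Mathlib


/-- A flat ℤ-graded superconnection `D = d + A_0 + A_1 + A_2` of total degree 1 on an acyclic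
two-term complex.  We work in the ring `A` of endomorphism-valued differential forms, with
`d` the (additive) exterior differential and `e0, e1` the complementary idempotent projections
onto the degree `0` and degree `1` summands of the complex; `A_0` (a 0-form, degree `−1`
endomorphism), `A_1` (a 1-form, degree `0`), `A_2` (a 2-form, degree `1`) are block matrices
with respect to `e0, e1`.  The Leibniz rules for the relevant products and `d² = 0` are
recorded as hypotheses.  Given the flatness equations
(1) `dA_0 = A_0 A_1 − A_1 A_0` and (2) `−dA_1 = A_0 A_2 + A_1² + A_2 A_0`,
and assuming `A_0` is invertible as a map from the degree 1 summand to the degree 0 summand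
(i.e. the complex is acyclic), then automatically `dA_2 = −A_1 A_2 + A_2 A_1`. -/
theorem superconnection_top_form (A : Type) [Ring A] (d : A →+ A) (A0 A1 A2 e0 e1 : A)
    (he : e0 + e1 = 1) (he00 : e0 * e0 = e0) (he11 : e1 * e1 = e1)
    (he01 : e0 * e1 = 0) (he10 : e1 * e0 = 0)
    (hA0blk : e0 * A0 * e1 = A0) (hA1blk : e0 * A1 * e0 + e1 * A1 * e1 = A1)
    (hA2blk : e1 * A2 * e0 = A2)
    (hde0l : ∀ x, d (e0 * x) = e0 * d x) (hde0r : ∀ x, d (x * e0) = d x * e0)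
    (hde1l : ∀ x, d (e1 * x) = e1 * d x) (hde1r : ∀ x, d (x * e1) = d x * e1)
    (hdd : d (d A1) = 0)
    (hL02 : d (A0 * A2) = d A0 * A2 + A0 * d A2)
    (hL11 : d (A1 * A1) = d A1 * A1 - A1 * d A1)
    (hL20 : d (A2 * A0) = d A2 * A0 + A2 * d A0)
    (heq1 : d A0 = A0 * A1 - A1 * A0)
    (heq2 : - d A1 = A0 * A2 + A1 * A1 + A2 * A0)
    (hA0inv : ∃ B : A, e1 * B * e0 = B ∧ A0 * B = e0 ∧ B * A0 = e1) :
    d A2 = - (A1 * A2) + A2 * A1 := by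
  obtain ⟨B, hBblk, hAB, hBA⟩ := hA0inv
  have h00 : ∀ x : A, e0 * (e0 * x) = e0 * x := fun x => by rw [← mul_assoc, he00]
  have h11 : ∀ x : A, e1 * (e1 * x) = e1 * x := fun x => by rw [← mul_assoc, he11]
  have h01 : ∀ x : A, e0 * (e1 * x) = 0 := fun x => by rw [← mul_assoc, he01, zero_mul]
  have h10 : ∀ x : A, e1 * (e0 * x) = 0 := fun x => by rw [← mul_assoc, he10, zero_mul]
  set Z : A := d A2 + A1 * A2 - A2 * A1 with hZ
  have hdA2blk : e1 * d A2 * e0 = d A2 := by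
    conv_rhs => rw [← hA2blk, hde0r, hde1l]
  have h1 : e1 * (A1 * A2) * e0 = A1 * A2 := by
    conv_lhs => rw [← hA1blk, ← hA2blk]
    conv_rhs => rw [← hA1blk, ← hA2blk]
    simp only [mul_add, add_mul, mul_assoc, h00, h11, h01, h10, he00, he11, he01, he10,
      zero_mul, mul_zero, add_zero, zero_add]
  have h2 : e1 * (A2 * A1) * e0 = A2 * A1 := by
    conv_lhs => rw [← hA1blk, ← hA2blk]
    conv_rhs => rw [← hA1blk, ← hA2blk]
    simp only [mul_add, add_mul, mul_assoc, h00, h11, h01, h10, he00, he11, he01, he10,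
      zero_mul, mul_zero, add_zero, zero_add]
  have hZblk : e1 * Z * e0 = Z := by
    rw [hZ]
    simp only [mul_sub, sub_mul, mul_add, add_mul]
    rw [hdA2blk, h1, h2]
  have hdA1 : d A1 = -(A0 * A2 + A1 * A1 + A2 * A0) := by
    rw [← heq2, neg_neg]
  have hd2 : d (A0 * A2) + d (A1 * A1) + d (A2 * A0) = 0 := by
    have h := congrArg d heq2
    rw [map_neg, hdd, map_add, map_add] at h
    rw [← h, neg_zero]
  rw [hL02, hL11, hL20, heq1, hdA1] at hd2
  have key : A0 * Z + Z * A0 = 0 := by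
    rw [hZ, ← hd2]
    noncomm_ring
  have hBZ : B * Z = 0 := by
    rw [← hBblk, ← hZblk]
    simp only [mul_assoc, h01, h11, h10, he01, mul_zero, zero_mul]
  have h3 : e1 * Z = 0 := by
    have h1' : B * (A0 * Z) + B * (Z * A0) = 0 := by rw [← mul_add, key, mul_zero]
    rw [← mul_assoc, hBA, ← mul_assoc, hBZ, zero_mul, add_zero] at h1'
    exact h1'
  have hZ0 : Z = 0 := by rw [← hZblk, h3, zero_mul]
  rw [hZ] at hZ0
  calc d A2 = (d A2 + A1 * A2 - A2 * A1) + (-(A1 * A2) + A2 * A1) := by abel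
    _ = 0 + (-(A1 * A2) + A2 * A1) := by rw [hZ0]
    _ = -(A1 * A2) + A2 * A1 := by rw [zero_add]
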